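/- (Theorem 3.1, (i) ⇒ (ii)) Assume (i): there exists C1 > 0 such that for every Λ > 0 and every real sequence (a_j), Σ_{j : λ_j ≤ Λ} |a_j|² ≤ e^{C1(1+Λ^σ)} ∫_ω | Σ_{j : λ_j ≤ Λ} a_j Φ_j |². Then (ii) holds: there exists C2 > 0 such that for all θ ∈ (0,1), all t > 0 and all u0 ∈ L²(Ω), ‖S(t)u0‖ ≤ e^{C2(1 + (1/(θ t))^{σ/(1−σ)})} ‖u0‖^θ ‖S(t)u0‖_ω^{1−θ}. -/

import Mathlib

open MeasureTheory Set Filter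
open scoped RealInnerProductSpace

noncomputable section

/-- The heat semigroup `S(t)u₀ = Σ_j e^{-λ_j t} ⟨u₀, Φ_j⟩ Φ_j` on `L²(Ω)`,
given a Hilbert basis `B` of eigenfunctions and eigenvalues `lam`. -/
noncomputable def heatSG {d : ℕ} {Ω : Set (EuclideanSpace ℝ (Fin d))}
    (B : HilbertBasis ℕ ℝ (Lp ℝ 2 (volume.restrict Ω))) (lam : ℕ → ℝ)
    (t : ℝ) (u : Lp ℝ 2 (volume.restrict Ω)) : Lp ℝ 2 (volume.restrict Ω) :=
  ∑' j, (Real.exp (-(lam j) * t) * ⟪u, B j⟫) • B j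

/-- Multiplication by the indicator function `1_ω` on `L²(Ω)`. -/
noncomputable def indLp {d : ℕ} {Ω : Set (EuclideanSpace ℝ (Fin d))}
    (ω : Set (EuclideanSpace ℝ (Fin d))) (hω : MeasurableSet ω)
    (f : Lp ℝ 2 (volume.restrict Ω)) : Lp ℝ 2 (volume.restrict Ω) :=
  MemLp.toLp (ω.indicator ⇑f) ((Lp.memLp f).indicator hω)

set_option synthInstance.maxHeartbeats 1000000
set_option maxHeartbeats 2000000

private lemma lp2_hasSum_sq (f : lp (fun _ : ℕ => ℝ) 2) :
    HasSum (fun i => (f i : ℝ) ^ 2) (‖f‖ ^ 2) := by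
  have h := lp.hasSum_norm (p := 2) (by norm_num) f
  simp only [ENNReal.toReal_ofNat, Real.rpow_two, Real.norm_eq_abs, sq_abs] at h
  exact h

private lemma memℓp_of_le {f g : ℕ → ℝ} (hg : Memℓp g 2) (h : ∀ i, |f i| ≤ |g i|) :
    Memℓp f 2 := by
  apply memℓp_gen (p := 2)
  have hs := hg.summable (p := 2) (by norm_num)
  simp only [ENNReal.toReal_ofNat, Real.rpow_two, Real.norm_eq_abs, sq_abs] at hs ⊢
  refine hs.of_nonneg_of_le (fun i => sq_nonneg _) (fun i => ?_)
  simpa [sq_abs] using pow_le_pow_left₀ (abs_nonneg _) (h i) 2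

private lemma indLp_norm_le {d : ℕ} {Ω : Set (EuclideanSpace ℝ (Fin d))}
    (ω : Set (EuclideanSpace ℝ (Fin d))) (hω : MeasurableSet ω)
    (f : Lp ℝ 2 (volume.restrict Ω)) : ‖indLp ω hω f‖ ≤ ‖f‖ := by
  rw [indLp, Lp.norm_toLp, Lp.norm_def]
  exact ENNReal.toReal_mono (Lp.eLpNorm_ne_top f) (eLpNorm_indicator_le _)

private lemma indLp_sub {d : ℕ} {Ω : Set (EuclideanSpace ℝ (Fin d))}
    (ω : Set (EuclideanSpace ℝ (Fin d))) (hω : MeasurableSet ω)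
    (f g : Lp ℝ 2 (volume.restrict Ω)) :
    indLp ω hω (f - g) = indLp ω hω f - indLp ω hω g := by
  rw [indLp, indLp, indLp, ← MemLp.toLp_sub]
  refine MemLp.toLp_congr _ _ ?_
  filter_upwards [Lp.coeFn_sub f g] with x hx
  by_cases h : x ∈ ω
  · simp only [Set.indicator_of_mem h, Pi.sub_apply]
    exact hx.trans rfl
  · simp [Set.indicator_of_notMem h]

private lemma young_aux {C1 σ s Λ : ℝ} (hC1 : 0 < C1) (hσ0 : 0 < σ) (hσ1 : σ < 1)
    (hs : 0 < s) (hΛ : 0 ≤ Λ) :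
    C1 * Λ ^ σ ≤ s * Λ + C1 ^ (1 / (1 - σ)) * (1 / s) ^ (σ / (1 - σ)) := by
  have h1σ : 0 < 1 - σ := by linarith
  have hpq : Real.HolderConjugate (1 / σ) (1 / (1 - σ)) := by
    rw [Real.holderConjugate_iff]
    constructor
    · rw [lt_div_iff₀ hσ0]; linarith
    · rw [one_div, one_div, inv_inv, inv_inv]; ring
  have ha : (0:ℝ) ≤ (s * Λ) ^ σ := Real.rpow_nonneg (by positivity) _
  have hb : (0:ℝ) ≤ C1 / s ^ σ := by positivity
  have hy := Real.young_inequality_of_nonneg ha hb hpq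
  have hab : (s * Λ) ^ σ * (C1 / s ^ σ) = C1 * Λ ^ σ := by
    rw [Real.mul_rpow hs.le hΛ]
    field_simp
  have hap : ((s * Λ) ^ σ) ^ (1 / σ) = s * Λ := by
    rw [← Real.rpow_mul (by positivity), mul_one_div_cancel hσ0.ne', Real.rpow_one]
  have hbp : (C1 / s ^ σ) ^ (1 / (1 - σ)) = C1 ^ (1 / (1 - σ)) * (1 / s) ^ (σ / (1 - σ)) := by
    rw [Real.div_rpow hC1.le (by positivity), ← Real.rpow_mul hs.le, one_div s,
      Real.inv_rpow hs.le, show σ * (1 / (1 - σ)) = σ / (1 - σ) by ring, div_eq_mul_inv]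
  rw [hab, hap, hbp] at hy
  have h1 : s * Λ / (1 / σ) ≤ s * Λ :=
    div_le_self (by positivity) (by rw [le_div_iff₀ hσ0]; linarith)
  have h2 : C1 ^ (1 / (1 - σ)) * (1 / s) ^ (σ / (1 - σ)) / (1 / (1 - σ)) ≤
      C1 ^ (1 / (1 - σ)) * (1 / s) ^ (σ / (1 - σ)) :=
    div_le_self (by positivity) (by rw [le_div_iff₀ h1σ]; linarith)
  linarith

private lemma key_opt (C1 σ : ℝ) (hC1 : 0 < C1) (hσ : σ ∈ Ioo (0:ℝ) 1) :
    ∃ C2 > 0, ∀ θ ∈ Ioo (0:ℝ) 1, ∀ t > 0, ∀ y M z : ℝ, 0 ≤ z → z ≤ y → y ≤ M →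
      (∀ Λ > 0, y ≤ 2 * Real.exp (C1 * (1 + Λ ^ σ)) * (z + Real.exp (-Λ * t) * M)) →
      y ≤ Real.exp (C2 * (1 + (1 / (θ * t)) ^ (σ / (1 - σ)))) * M ^ θ * z ^ (1 - θ) := by
  obtain ⟨hσ0, hσ1⟩ := hσ
  have h1σ : 0 < 1 - σ := by linarith
  have hlog4 : 0 < Real.log 4 := Real.log_pos (by norm_num)
  have hC1q : 0 < C1 ^ (1 / (1 - σ)) := Real.rpow_pos_of_pos hC1 _
  refine ⟨Real.log 4 + C1 + C1 ^ (1 / (1 - σ)), by positivity, ?_⟩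
  intro θ hθ t ht y M z hz hzy hyM H
  obtain ⟨hθ0, hθ1⟩ := hθ
  have hy : 0 ≤ y := hz.trans hzy
  have hM : 0 ≤ M := hy.trans hyM
  have hts : 0 < θ * t := mul_pos hθ0 ht
  have hT : 0 ≤ (1 / (θ * t)) ^ (σ / (1 - σ)) := Real.rpow_nonneg (by positivity) _
  have hE1 : 1 ≤ Real.exp ((Real.log 4 + C1 + C1 ^ (1 / (1 - σ))) *
      (1 + (1 / (θ * t)) ^ (σ / (1 - σ)))) := Real.one_le_exp (by positivity)
  have claim : ∀ ε > 0, y ≤ Real.exp ((Real.log 4 + C1 + C1 ^ (1 / (1 - σ))) *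
      (1 + (1 / (θ * t)) ^ (σ / (1 - σ)))) * M ^ θ * (z + ε) ^ (1 - θ) := by
    intro ε hε
    have hzε : 0 < z + ε := by linarith
    by_cases hcase : M ≤ z + ε
    · have hMsplit : M = M ^ θ * M ^ (1 - θ) := by
        rw [← Real.rpow_add' hM (by norm_num), add_sub_cancel, Real.rpow_one]
      calc y ≤ M := hyM
        _ = M ^ θ * M ^ (1 - θ) := hMsplit
        _ ≤ M ^ θ * (z + ε) ^ (1 - θ) :=
            mul_le_mul_of_nonneg_left
              (Real.rpow_le_rpow hM hcase (by linarith)) (Real.rpow_nonneg hM _)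
        _ ≤ _ := by
            rw [mul_assoc]
            exact le_mul_of_one_le_left
              (mul_nonneg (Real.rpow_nonneg hM _) (Real.rpow_nonneg hzε.le _)) hE1
    · push_neg at hcase
      have hM0 : 0 < M := lt_trans hzε hcase
      have hMz1 : 1 < M / (z + ε) := (one_lt_div hzε).mpr hcase
      have hΛ : 0 < Real.log (M / (z + ε)) / t := div_pos (Real.log_pos hMz1) ht
      have hΛt : Real.log (M / (z + ε)) / t * t = Real.log (M / (z + ε)) :=
        div_mul_cancel₀ _ ht.ne'
      have hexp : Real.exp (-(Real.log (M / (z + ε)) / t) * t) = (z + ε) / M := by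
        rw [neg_mul, hΛt, Real.exp_neg, Real.exp_log (by positivity), inv_div]
      have h1 := H _ hΛ
      rw [hexp, div_mul_cancel₀ _ hM0.ne'] at h1
      have hKpos : 0 < Real.exp (C1 * (1 + (Real.log (M / (z + ε)) / t) ^ σ)) :=
        Real.exp_pos _
      have h2 : y ≤ 4 * Real.exp (C1 * (1 + (Real.log (M / (z + ε)) / t) ^ σ)) * (z + ε) := by
        nlinarith [mul_nonneg hKpos.le hε.le, mul_nonneg hKpos.le hz]
      have hpow : (M / (z + ε)) ^ θ = Real.exp (Real.log (M / (z + ε)) * θ) :=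
        Real.rpow_def_of_pos (by positivity) θ
      have hyoung := young_aux hC1 hσ0 hσ1 hts hΛ.le
      have hexpineq : 4 * Real.exp (C1 * (1 + (Real.log (M / (z + ε)) / t) ^ σ)) ≤
          Real.exp ((Real.log 4 + C1 + C1 ^ (1 / (1 - σ))) *
            (1 + (1 / (θ * t)) ^ (σ / (1 - σ)))) * (M / (z + ε)) ^ θ := by
        rw [hpow]
        nth_rewrite 1 [show (4:ℝ) = Real.exp (Real.log 4) from (Real.exp_log (by norm_num)).symm]
        rw [← Real.exp_add, ← Real.exp_add]
        apply Real.exp_le_exp.mpr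
        have hc2b : C1 ^ (1 / (1 - σ)) * (1 / (θ * t)) ^ (σ / (1 - σ)) ≤
            (Real.log 4 + C1 + C1 ^ (1 / (1 - σ))) * (1 / (θ * t)) ^ (σ / (1 - σ)) :=
          mul_le_mul_of_nonneg_right (by linarith) hT
        have hcancel : θ * t * (Real.log (M / (z + ε)) / t) = Real.log (M / (z + ε)) * θ := by
          field_simp
        rw [hcancel] at hyoung
        nlinarith [hyoung]
      have hMdiv : (M / (z + ε)) ^ θ * (z + ε) = M ^ θ * (z + ε) ^ (1 - θ) := by
        rw [Real.div_rpow hM hzε.le, div_mul_eq_mul_div,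
          div_eq_iff (Real.rpow_pos_of_pos hzε θ).ne', mul_assoc, ← Real.rpow_add hzε,
          sub_add_cancel, Real.rpow_one]
      calc y ≤ 4 * Real.exp (C1 * (1 + (Real.log (M / (z + ε)) / t) ^ σ)) * (z + ε) := h2
        _ ≤ Real.exp ((Real.log 4 + C1 + C1 ^ (1 / (1 - σ))) *
              (1 + (1 / (θ * t)) ^ (σ / (1 - σ)))) * (M / (z + ε)) ^ θ * (z + ε) :=
            mul_le_mul_of_nonneg_right hexpineq hzε.le
        _ = _ := by rw [mul_assoc, mul_assoc, hMdiv]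
  have hconta : ContinuousAt (fun ε : ℝ => Real.exp ((Real.log 4 + C1 + C1 ^ (1 / (1 - σ))) *
      (1 + (1 / (θ * t)) ^ (σ / (1 - σ)))) * M ^ θ * (z + ε) ^ (1 - θ)) 0 := by
    have h1 : ContinuousAt (fun ε : ℝ => z + ε) 0 := by fun_prop
    have h2 : ContinuousAt (fun x : ℝ => x ^ (1 - θ)) (z + 0) :=
      Real.continuousAt_rpow_const _ _ (Or.inr (by linarith))
    exact continuousAt_const.mul (h2.comp h1)
  have htend : Tendsto (fun ε : ℝ => Real.exp ((Real.log 4 + C1 + C1 ^ (1 / (1 - σ))) *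
      (1 + (1 / (θ * t)) ^ (σ / (1 - σ)))) * M ^ θ * (z + ε) ^ (1 - θ))
      (nhdsWithin 0 (Ioi 0))
      (nhds (Real.exp ((Real.log 4 + C1 + C1 ^ (1 / (1 - σ))) *
        (1 + (1 / (θ * t)) ^ (σ / (1 - σ)))) * M ^ θ * z ^ (1 - θ))) := by
    have h3 := (hconta.continuousWithinAt (s := Ioi (0:ℝ))).tendsto
    simpa [add_zero] using h3
  refine ge_of_tendsto htend ?_
  filter_upwards [self_mem_nhdsWithin] with ε hε
  exact claim ε hε

/-- Theorem 3.1, (i) ⇒ (ii). -/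
theorem spectral_ineq_implies_observation_at_one_time
    (d : ℕ) (hd : 1 ≤ d) (Ω ω : Set (EuclideanSpace ℝ (Fin d)))
    (hΩo : IsOpen Ω) (hΩb : Bornology.IsBounded Ω) (hΩc : IsConnected Ω)
    (hωo : IsOpen ω) (hωne : ω.Nonempty) (hωΩ : ω ⊆ Ω) (hωm : MeasurableSet ω)
    (B : HilbertBasis ℕ ℝ (Lp ℝ 2 (volume.restrict Ω)))
    (lam : ℕ → ℝ) (hpos : ∀ j, 0 < lam j) (hmono : Monotone lam)
    (hlim : Tendsto lam atTop atTop)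
    (hfin : ∀ Λ : ℝ, {j : ℕ | lam j ≤ Λ}.Finite)
    (σ : ℝ) (hσ : σ ∈ Ioo (0:ℝ) 1)
    -- (i) : spectral inequality
    (hi : ∃ C1 > 0, ∀ Λ > 0, ∀ a : ℕ → ℝ,
      ∑ j ∈ (hfin Λ).toFinset, (a j) ^ 2 ≤
        Real.exp (C1 * (1 + Λ ^ σ)) *
          ‖indLp ω hωm (∑ j ∈ (hfin Λ).toFinset, a j • B j)‖ ^ 2) :
    -- (ii)
    ∃ C2 > 0, ∀ θ ∈ Ioo (0:ℝ) 1, ∀ t > 0, ∀ u0 : Lp ℝ 2 (volume.restrict Ω),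
      ‖heatSG B lam t u0‖ ≤
        Real.exp (C2 * (1 + (1 / (θ * t)) ^ (σ / (1 - σ)))) *
          ‖u0‖ ^ θ * ‖indLp ω hωm (heatSG B lam t u0)‖ ^ (1 - θ) := by
  classical
  obtain ⟨C1, hC1, hspec⟩ := hi
  obtain ⟨C2, hC2, hkey⟩ := key_opt C1 σ hC1 hσ
  refine ⟨C2, hC2, ?_⟩
  intro θ hθ t ht u0
  set a : ℕ → ℝ := fun j => B.repr u0 j with ha
  set g : ℕ → ℝ := fun j => Real.exp (-(lam j) * t) * a j with hgdef
  have hga : ∀ j, |g j| ≤ |a j| := by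
    intro j
    rw [hgdef]
    simp only [abs_mul, Real.abs_exp]
    calc Real.exp (-(lam j) * t) * |a j| ≤ 1 * |a j| := by
          apply mul_le_mul_of_nonneg_right _ (abs_nonneg _)
          exact Real.exp_le_one_iff.mpr (by nlinarith [hpos j])
      _ = |a j| := one_mul _
  have hgmem : Memℓp g 2 := memℓp_of_le (lp.memℓp (B.repr u0)) hga
  set G : lp (fun _ : ℕ => ℝ) 2 := ⟨g, hgmem⟩ with hG
  set v := B.repr.symm G with hv
  have hSG : heatSG B lam t u0 = v := by
    rw [heatSG, hv, ← (B.hasSum_repr_symm G).tsum_eq]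
    congr 1
    funext j
    congr 1
    have h1 : (G : ∀ _ : ℕ, ℝ) j = Real.exp (-(lam j) * t) * (B.repr u0) j := rfl
    rw [h1, real_inner_comm]
    congr 1
    exact (B.repr_apply_apply u0 j).symm
  have hcoordv : ∀ j, B.repr v j = g j := by
    intro j
    rw [hv, LinearIsometryEquiv.apply_symm_apply]
  have hnormv : ‖v‖ = ‖G‖ := LinearIsometryEquiv.norm_map _ _
  have hnormu : ‖B.repr u0‖ = ‖u0‖ := LinearIsometryEquiv.norm_map _ _
  have hM2 : HasSum (fun j => (a j) ^ 2) (‖u0‖ ^ 2) := by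
    have := lp2_hasSum_sq (B.repr u0)
    rwa [hnormu] at this
  have hy2 : HasSum (fun j => (g j) ^ 2) (‖v‖ ^ 2) := by
    have := lp2_hasSum_sq G
    rwa [← hnormv] at this
  have hyM : ‖v‖ ≤ ‖u0‖ := by
    have hsq : ‖v‖ ^ 2 ≤ ‖u0‖ ^ 2 := by
      refine hasSum_le (fun j => ?_) hy2 hM2
      simpa [sq_abs] using pow_le_pow_left₀ (abs_nonneg _) (hga j) 2
    exact le_of_pow_le_pow_left₀ two_ne_zero (norm_nonneg _) hsq
  have hzv : ‖indLp ω hωm v‖ ≤ ‖v‖ := indLp_norm_le ω hωm v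
  -- the one-parameter family of estimates
  have H : ∀ Λ > 0, ‖v‖ ≤ 2 * Real.exp (C1 * (1 + Λ ^ σ)) *
      (‖indLp ω hωm v‖ + Real.exp (-Λ * t) * ‖u0‖) := by
    intro Λ hΛ
    set F := (hfin Λ).toFinset with hF
    set low : Lp ℝ 2 (volume.restrict Ω) := ∑ j ∈ F, g j • B j with hlowdef
    have hmemF : ∀ k, k ∈ F ↔ lam k ≤ Λ := fun k => (hfin Λ).mem_toFinset
    have hite : ∀ i k : ℕ, ⟪B i, B k⟫ = if i = k then (1:ℝ) else 0 :=
      orthonormal_iff_ite.mp B.orthonormal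
    have hlowcoord : ∀ k, B.repr low k = if k ∈ F then g k else 0 := by
      intro k
      rw [B.repr_apply_apply, hlowdef, inner_sum]
      simp only [real_inner_smul_right, hite, mul_ite, mul_one, mul_zero]
      rw [Finset.sum_ite_eq]
    have hdcoord : ∀ k, B.repr (v - low) k = if k ∈ F then 0 else g k := by
      intro k
      rw [map_sub]
      have h0 : (B.repr v - B.repr low) k = B.repr v k - B.repr low k := rfl
      rw [h0, hcoordv, hlowcoord]
      split <;> simp
    have hd2 : HasSum (fun k => (if k ∈ F then (0:ℝ) else g k) ^ 2) (‖v - low‖ ^ 2) := by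
      have h := lp2_hasSum_sq (B.repr (v - low))
      rw [LinearIsometryEquiv.norm_map] at h
      simpa only [hdcoord] using h
    have hhle : ‖v - low‖ ≤ Real.exp (-Λ * t) * ‖u0‖ := by
      have hM2' : HasSum (fun j => (Real.exp (-Λ * t)) ^ 2 * (a j) ^ 2)
          ((Real.exp (-Λ * t) * ‖u0‖) ^ 2) := by
        have h := hM2.mul_left ((Real.exp (-Λ * t)) ^ 2)
        rwa [← mul_pow] at h
      have hsq : ‖v - low‖ ^ 2 ≤ (Real.exp (-Λ * t) * ‖u0‖) ^ 2 := by
        refine hasSum_le (fun k => ?_) hd2 hM2'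
        by_cases hk : k ∈ F
        · simp only [hk, if_true]
          rw [zero_pow two_ne_zero]
          positivity
        · simp only [hk, if_false]
          have hlamk : Λ < lam k := lt_of_not_ge (fun hc => hk ((hmemF k).mpr hc))
          have habs : |g k| ≤ Real.exp (-Λ * t) * |a k| := by
            rw [hgdef]
            simp only [abs_mul, Real.abs_exp]
            apply mul_le_mul_of_nonneg_right _ (abs_nonneg _)
            exact Real.exp_le_exp.mpr (by nlinarith)
          calc (g k) ^ 2 = |g k| ^ 2 := (sq_abs _).symm
            _ ≤ (Real.exp (-Λ * t) * |a k|) ^ 2 := pow_le_pow_left₀ (abs_nonneg _) habs 2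
            _ = Real.exp (-Λ * t) ^ 2 * (a k) ^ 2 := by rw [mul_pow, sq_abs]
      exact le_of_pow_le_pow_left₀ two_ne_zero (by positivity) hsq
    have hlow2 : ‖low‖ ^ 2 = ∑ j ∈ F, (g j) ^ 2 := by
      rw [← real_inner_self_eq_norm_sq, hlowdef, B.orthonormal.inner_sum]
      simp [sq]
    have hspecΛ := hspec Λ hΛ g
    have hindlow : ‖indLp ω hωm low‖ ≤ ‖indLp ω hωm v‖ + ‖v - low‖ := by
      have hsplit : indLp ω hωm low = indLp ω hωm v - indLp ω hωm (v - low) := by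
        rw [← indLp_sub]
        congr 1
        abel
      rw [hsplit]
      refine (norm_sub_le _ _).trans ?_
      exact add_le_add_right (indLp_norm_le ω hωm _) _
    have hK1 : 1 ≤ Real.exp (C1 * (1 + Λ ^ σ)) :=
      Real.one_le_exp (by positivity)
    have hlowle : ‖low‖ ≤ Real.exp (C1 * (1 + Λ ^ σ)) *
        (‖indLp ω hωm v‖ + ‖v - low‖) := by
      have h1 : ‖low‖ ^ 2 ≤ Real.exp (C1 * (1 + Λ ^ σ)) * ‖indLp ω hωm low‖ ^ 2 := by
        rw [hlow2]
        exact hspecΛ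
      have h2 : ‖indLp ω hωm low‖ ^ 2 ≤ (‖indLp ω hωm v‖ + ‖v - low‖) ^ 2 :=
        pow_le_pow_left₀ (norm_nonneg _) hindlow 2
      refine le_of_pow_le_pow_left₀ two_ne_zero (by positivity) ?_
      calc ‖low‖ ^ 2 ≤ Real.exp (C1 * (1 + Λ ^ σ)) * ‖indLp ω hωm low‖ ^ 2 := h1
        _ ≤ Real.exp (C1 * (1 + Λ ^ σ)) * (‖indLp ω hωm v‖ + ‖v - low‖) ^ 2 :=
            mul_le_mul_of_nonneg_left h2 (Real.exp_pos _).le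
        _ ≤ (Real.exp (C1 * (1 + Λ ^ σ)) * (‖indLp ω hωm v‖ + ‖v - low‖)) ^ 2 := by
            rw [mul_pow]
            apply mul_le_mul_of_nonneg_right _ (by positivity)
            nlinarith [Real.exp_pos (C1 * (1 + Λ ^ σ))]
    have htri : ‖v‖ ≤ ‖low‖ + ‖v - low‖ := by
      have h := norm_add_le low (v - low)
      have h2 : low + (v - low) = v := by abel
      rwa [h2] at h
    have hvl0 : (0:ℝ) ≤ ‖v - low‖ := norm_nonneg _
    have hiv0 : (0:ℝ) ≤ ‖indLp ω hωm v‖ := norm_nonneg _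
    nlinarith [hhle, hlowle, htri, hK1, Real.exp_pos (C1 * (1 + Λ ^ σ)),
      mul_nonneg (Real.exp_pos (C1 * (1 + Λ ^ σ))).le hvl0]
  have hfinal := hkey θ hθ t ht ‖v‖ ‖u0‖ ‖indLp ω hωm v‖ (norm_nonneg _) hzv hyM H
  rw [hSG]
  exact hfinal
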